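/- Let G be a λ-metric graph on vertex set V with edge weights bounded by L. Suppose ν ⊆ V is a set of vertices each having at least |V|/4 neighbors u with w(v,u) ≥ λL/4 (degree in the λL/4-threshold graph at least |V|/4), and let E_ν be the set of edges of G incident to at least one vertex of ν. Then (λ/32)·L·|V|·|ν| ≤ Σ_{e∈E_ν} w(e) ≤ L·|V|·|ν|. -/
import Mathlib


private lemma sum_erase_swap {V : Type*} [Fintype V] [DecidableEq V] (F : V → V → ℝ) :
    ∑ u : V, ∑ v ∈ Finset.univ.erase u, F u v
      = ∑ v : V, ∑ u ∈ Finset.univ.erase v, F u v := by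
  have h1 : ∀ u : V, ∑ v ∈ Finset.univ.erase u, F u v = (∑ v : V, F u v) - F u u := by
    intro u; rw [Finset.sum_erase_eq_sub (Finset.mem_univ u)]
  have h2 : ∀ v : V, ∑ u ∈ Finset.univ.erase v, F u v = (∑ u : V, F u v) - F v v := by
    intro v; rw [Finset.sum_erase_eq_sub (Finset.mem_univ v)]
  simp_rw [h1, h2, Finset.sum_sub_distrib]
  rw [Finset.sum_comm]


/-- In a λ-metric graph with weights bounded by `L`, if every vertex of
`ν ⊆ V` has at least `|V|/4` neighbors at distance at least `λL/4`, then the total weight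
of the edges incident to `ν` is between `(λ/32)·L·|V|·|ν|` and `L·|V|·|ν|`.
The edge sum is expressed as half the sum over ordered pairs `(u,v)`, `u ≠ v`, with an
endpoint in `ν`. -/
theorem weight_of_edges_incident_to_high_degree_set {V : Type*} [Fintype V] [DecidableEq V]
    (w : V → V → ℝ) (lam L : ℝ)
    (hlam_pos : 0 < lam) (hlam_le : lam ≤ 1)
    (hnonneg : ∀ a b, 0 ≤ w a b)
    (hsymm : ∀ a b, w a b = w b a)
    (htri : ∀ a b c, w a b + w b c ≥ lam * w c a)
    (hL : ∀ a b, a ≠ b → w a b ≤ L)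
    (ν : Finset V)
    (hdeg : ∀ v ∈ ν, ((Finset.univ.filter fun u : V => u ≠ v ∧ w u v ≥ lam * L / 4).card : ℝ)
      ≥ (Fintype.card V : ℝ) / 4) :
    (lam / 32) * L * (Fintype.card V) * ν.card
      ≤ (1 / 2) * ∑ u : V, ∑ v ∈ Finset.univ.erase u,
          (if u ∈ ν ∨ v ∈ ν then w u v else 0) ∧
    (1 / 2) * ∑ u : V, ∑ v ∈ Finset.univ.erase u,
          (if u ∈ ν ∨ v ∈ ν then w u v else 0)
      ≤ L * (Fintype.card V) * ν.card := by
  rcases Finset.eq_empty_or_nonempty ν with hν | hν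
  · subst hν; simp
  · obtain ⟨v0, hv0⟩ := hν
    have hVpos : 0 < Fintype.card V := Fintype.card_pos_iff.mpr ⟨v0⟩
    have hfpos : 0 < ((Finset.univ.filter fun u : V => u ≠ v0 ∧ w u v0 ≥ lam * L / 4).card : ℝ) := by
      refine lt_of_lt_of_le ?_ (hdeg v0 hv0)
      positivity
    have hfne : (Finset.univ.filter fun u : V => u ≠ v0 ∧ w u v0 ≥ lam * L / 4).Nonempty := by
      rw [← Finset.card_pos]
      exact_mod_cast hfpos
    obtain ⟨u0, hu0⟩ := hfne
    simp only [Finset.mem_filter] at hu0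
    have hL0 : 0 ≤ L := le_trans (hnonneg u0 v0) (hL u0 v0 hu0.2.1)
    have hcV : (0:ℝ) < (Fintype.card V : ℝ) := by exact_mod_cast hVpos
    have hnc : (0:ℝ) ≤ (ν.card : ℝ) := by positivity
    constructor
    · -- lower bound
      have key : ∀ v ∈ ν, lam * L / 4 * ((Fintype.card V : ℝ) / 4)
          ≤ ∑ u ∈ Finset.univ.erase v, w u v := by
        intro v hv
        have hsub : (Finset.univ.filter fun u : V => u ≠ v ∧ w u v ≥ lam * L / 4)
            ⊆ Finset.univ.erase v := by
          intro u hu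
          simp only [Finset.mem_filter] at hu
          exact Finset.mem_erase.mpr ⟨hu.2.1, Finset.mem_univ u⟩
        calc lam * L / 4 * ((Fintype.card V : ℝ) / 4)
            ≤ lam * L / 4 *
              ((Finset.univ.filter fun u : V => u ≠ v ∧ w u v ≥ lam * L / 4).card : ℝ) := by
              apply mul_le_mul_of_nonneg_left (hdeg v hv); positivity
          _ = ∑ u ∈ Finset.univ.filter fun u : V => u ≠ v ∧ w u v ≥ lam * L / 4,
              lam * L / 4 := by rw [Finset.sum_const, nsmul_eq_mul]; ring
          _ ≤ ∑ u ∈ Finset.univ.filter fun u : V => u ≠ v ∧ w u v ≥ lam * L / 4, w u v :=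
              Finset.sum_le_sum fun u hu => (Finset.mem_filter.mp hu).2.2
          _ ≤ ∑ u ∈ Finset.univ.erase v, w u v :=
              Finset.sum_le_sum_of_subset_of_nonneg hsub fun u _ _ => hnonneg u v
      have h1 : ∑ v ∈ ν, ∑ u ∈ Finset.univ.erase v, w u v
          ≤ ∑ u : V, ∑ v ∈ Finset.univ.erase u, (if u ∈ ν ∨ v ∈ ν then w u v else 0) := by
        rw [sum_erase_swap]
        have : ∑ v ∈ ν, ∑ u ∈ Finset.univ.erase v, w u v
            = ∑ v : V, (if v ∈ ν then ∑ u ∈ Finset.univ.erase v, w u v else 0) := by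
          rw [Finset.sum_ite_mem, Finset.univ_inter]
        rw [this]
        apply Finset.sum_le_sum
        intro v _
        by_cases hv : v ∈ ν
        · simp only [hv, if_true]
          apply Finset.sum_le_sum
          intro u _
          simp [hv]
        · simp only [hv, if_false]
          apply Finset.sum_nonneg
          intro u _
          split <;> [exact hnonneg u v; exact le_rfl]
      have h2 : (ν.card : ℝ) * (lam * L / 4 * ((Fintype.card V : ℝ) / 4))
          ≤ ∑ v ∈ ν, ∑ u ∈ Finset.univ.erase v, w u v := by
        calc (ν.card : ℝ) * (lam * L / 4 * ((Fintype.card V : ℝ) / 4))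
            = ∑ _v ∈ ν, lam * L / 4 * ((Fintype.card V : ℝ) / 4) := by
              rw [Finset.sum_const, nsmul_eq_mul]
          _ ≤ _ := Finset.sum_le_sum key
      have : (lam / 32) * L * (Fintype.card V : ℝ) * (ν.card : ℝ)
          = (1/2) * ((ν.card : ℝ) * (lam * L / 4 * ((Fintype.card V : ℝ) / 4))) := by ring
      rw [this]
      linarith [le_trans h2 h1]
    · -- upper bound
      have hstep : ∑ u : V, ∑ v ∈ Finset.univ.erase u, (if u ∈ ν ∨ v ∈ ν then w u v else 0)
          ≤ ∑ u : V, ((Fintype.card V : ℝ) * (if u ∈ ν then L else 0) + (ν.card : ℝ) * L) := by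
        apply Finset.sum_le_sum
        intro u _
        have hb : ∑ v ∈ Finset.univ.erase u, (if u ∈ ν ∨ v ∈ ν then w u v else 0)
            ≤ ∑ v ∈ Finset.univ.erase u,
              ((if u ∈ ν then L else 0) + (if v ∈ ν then L else 0)) := by
          apply Finset.sum_le_sum
          intro v hv
          have hne : u ≠ v := (Finset.mem_erase.mp hv).1.symm
          have hw := hL u v hne
          have hw0 := hnonneg u v
          split_ifs with h h1 h2 h1 h2 <;> try linarith
          · exfalso; tauto
        rw [Finset.sum_add_distrib] at hb
        have hb1 : ∑ _v ∈ Finset.univ.erase u, (if u ∈ ν then L else 0)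
            ≤ (Fintype.card V : ℝ) * (if u ∈ ν then L else 0) := by
          rw [Finset.sum_const, nsmul_eq_mul]
          apply mul_le_mul_of_nonneg_right
          · exact_mod_cast Finset.card_le_univ _
          · split <;> [exact hL0; exact le_rfl]
        have hb2 : ∑ v ∈ Finset.univ.erase u, (if v ∈ ν then L else 0)
            ≤ (ν.card : ℝ) * L := by
          calc ∑ v ∈ Finset.univ.erase u, (if v ∈ ν then L else 0)
              ≤ ∑ v : V, (if v ∈ ν then L else 0) := by
                apply Finset.sum_le_sum_of_subset_of_nonneg (Finset.erase_subset _ _)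
                intro v _ _
                split <;> [exact hL0; exact le_rfl]
            _ = (ν.card : ℝ) * L := by
                rw [Finset.sum_ite_mem, Finset.univ_inter, Finset.sum_const, nsmul_eq_mul]
        calc ∑ v ∈ Finset.univ.erase u, (if u ∈ ν ∨ v ∈ ν then w u v else 0)
            ≤ _ := hb
          _ ≤ _ := add_le_add hb1 hb2
      have hstep2 : ∑ u : V, ((Fintype.card V : ℝ) * (if u ∈ ν then L else 0) + (ν.card : ℝ) * L)
          = 2 * (L * (Fintype.card V : ℝ) * (ν.card : ℝ)) := by
        rw [Finset.sum_add_distrib, ← Finset.mul_sum, Finset.sum_ite_mem, Finset.univ_inter,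
          Finset.sum_const, Finset.sum_const, nsmul_eq_mul, nsmul_eq_mul,
          Finset.card_univ]
        ring
      rw [hstep2] at hstep
      linarith
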